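/- For every integer k ≥ 1, r(S(2k−1, k−1)) ≥ (21/5)k − o(k); in particular, for every ε > 0 there exists K such that for all k ≥ K, r(S(2k−1, k−1)) ≥ (21/5 − ε)k. Consequently, r(S(2k−1,k−1)) exceeds the Burr bound r_B = 4k − 1 for large k. -/

import Mathlib

open SimpleGraph Set

/-- `G` contains a copy of the double star `S(n,m)`. -/
def HasDoubleStar {V : Type*} (G : SimpleGraph V) (n m : ℕ) : Prop :=
  ∃ (u v : V) (A B : Finset V), G.Adj u v ∧
    ↑A ⊆ G.neighborSet u ∧ ↑B ⊆ G.neighborSet v ∧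
    v ∉ A ∧ u ∉ B ∧ Disjoint A B ∧ A.card = n ∧ B.card = m

/-- Ramsey number of the double star `S(n,m)`. -/
noncomputable def doubleStarRamsey (n m : ℕ) : ℕ :=
  sInf {N : ℕ | ∀ G : SimpleGraph (Fin N), HasDoubleStar G n m ∨ HasDoubleStar Gᶜ n m}

/-- `G` is a `(δ,η)`-graph. -/
def IsDEGraph {V : Type*} [Fintype V] (δ η : ℝ) (G : SimpleGraph V) : Prop :=
  1 < Fintype.card V ∧
  (∀ v : V, ((G.neighborSet v).ncard : ℝ) + 1 ≥ δ * Fintype.card V) ∧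
  (∀ u v : V, G.Adj u v →
    ((G.neighborSet u ∪ G.neighborSet v).ncard : ℝ) ≤ (1 - η) * Fintype.card V)

namespace DSProof

open Finset

/-! ### The base graph: Kneser graph K(7,2) = complement of the line graph of K₇ -/

def pr : Fin 21 → ℕ × ℕ :=
  ![(0,1),(0,2),(0,3),(0,4),(0,5),(0,6),(1,2),(1,3),(1,4),(1,5),(1,6),
    (2,3),(2,4),(2,5),(2,6),(3,4),(3,5),(3,6),(4,5),(4,6),(5,6)]

def hAdj (i j : Fin 21) : Bool :=
  (pr i).1 ≠ (pr j).1 && (pr i).1 ≠ (pr j).2 && (pr i).2 ≠ (pr j).1 && (pr i).2 ≠ (pr j).2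

lemma hAdj_symm : ∀ i j, hAdj i j = hAdj j i := by decide
lemma hAdj_irrefl : ∀ i, hAdj i i = false := by decide
lemma hAdj_deg : ∀ i, (Finset.univ.filter (fun j => hAdj i j = true)).card = 10 := by decide
lemma hAdj_codeg : ∀ i j, hAdj i j = false →
    6 ≤ (Finset.univ.filter (fun t => hAdj i t = true ∧ hAdj j t = true)).card := by decide

/-! ### Counting residues -/

def res {N : ℕ} (v : Fin N) : Fin 21 := ⟨v.val % 21, Nat.mod_lt _ (by norm_num)⟩

lemma count_upper {N : ℕ} (P : Fin 21 → Prop) [DecidablePred P] :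
    (Finset.univ.filter (fun v : Fin N => P (res v))).card
      ≤ (Finset.univ.filter P).card * (N / 21 + 1) := by
  classical
  have h := Finset.card_le_card_of_injOn
    (f := fun v : Fin N => ((res v,
      ⟨v.val / 21, Nat.lt_succ_of_le (Nat.div_le_div_right (Nat.le_of_lt v.isLt))⟩) :
        Fin 21 × Fin (N / 21 + 1)))
    (s := Finset.univ.filter (fun v : Fin N => P (res v)))
    (t := (Finset.univ.filter P) ×ˢ Finset.univ)
    (by
      intro v hv
      rw [Finset.mem_coe, Finset.mem_filter] at hv
      rw [Finset.mem_coe, Finset.mem_product]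
      exact ⟨Finset.mem_filter.2 ⟨Finset.mem_univ _, hv.2⟩, Finset.mem_univ _⟩)
    (by
      intro a _ b _ hab
      have h1 : res a = res b := congrArg Prod.fst hab
      have h2 : a.val / 21 = b.val / 21 := congrArg Fin.val (congrArg Prod.snd hab)
      have h3 : a.val % 21 = b.val % 21 := congrArg Fin.val h1
      have h4 := Nat.div_add_mod a.val 21
      have h5 := Nat.div_add_mod b.val 21
      exact Fin.ext (by omega))
  calc (Finset.univ.filter (fun v : Fin N => P (res v))).card
      ≤ ((Finset.univ.filter P) ×ˢ (Finset.univ : Finset (Fin (N / 21 + 1)))).card := h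
    _ = (Finset.univ.filter P).card * (N / 21 + 1) := by
        rw [Finset.card_product, Finset.card_univ, Fintype.card_fin]

lemma count_lower {N : ℕ} (P : Fin 21 → Prop) [DecidablePred P] :
    (Finset.univ.filter P).card * (N / 21)
      ≤ (Finset.univ.filter (fun v : Fin N => P (res v))).card := by
  classical
  have hlt : ∀ p : Fin 21 × Fin (N / 21), p.1.val + 21 * p.2.val < N := by
    intro p
    have h1 : p.2.val + 1 ≤ N / 21 := p.2.isLt
    have h2 : 21 * (p.2.val + 1) ≤ 21 * (N / 21) := Nat.mul_le_mul_left _ h1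
    have h3 : N / 21 * 21 ≤ N := Nat.div_mul_le_self N 21
    have h4 : p.1.val < 21 := p.1.isLt
    omega
  have h := Finset.card_le_card_of_injOn
    (f := fun p : Fin 21 × Fin (N / 21) => (⟨p.1.val + 21 * p.2.val, hlt p⟩ : Fin N))
    (s := (Finset.univ.filter P) ×ˢ Finset.univ)
    (t := Finset.univ.filter (fun v : Fin N => P (res v)))
    (by
      intro p hp
      rw [Finset.mem_coe, Finset.mem_product, Finset.mem_filter] at hp
      rw [Finset.mem_coe, Finset.mem_filter]
      refine ⟨Finset.mem_univ _, ?_⟩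
      have hres : res (⟨p.1.val + 21 * p.2.val, hlt p⟩ : Fin N) = p.1 := by
        apply Fin.ext
        show (p.1.val + 21 * p.2.val) % 21 = p.1.val
        rw [Nat.add_mul_mod_self_left]
        exact Nat.mod_eq_of_lt p.1.isLt
      rw [hres]
      exact hp.1.2)
    (by
      intro a _ b _ hab
      have h1 : a.1.val + 21 * a.2.val = b.1.val + 21 * b.2.val := congrArg Fin.val hab
      have h2 : a.1.val < 21 := a.1.isLt
      have h3 : b.1.val < 21 := b.1.isLt
      have h4 : a.1.val = b.1.val := by omega
      have h5 : a.2.val = b.2.val := by omega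
      exact Prod.ext (Fin.ext h4) (Fin.ext h5))
  calc (Finset.univ.filter P).card * (N / 21)
      = ((Finset.univ.filter P) ×ˢ (Finset.univ : Finset (Fin (N / 21)))).card := by
        rw [Finset.card_product, Finset.card_univ, Fintype.card_fin]
    _ ≤ _ := h

/-! ### The blow-up graph -/

def bup (N : ℕ) : SimpleGraph (Fin N) where
  Adj u v := hAdj (res u) (res v) = true
  symm := by constructor; intro u v h; rwa [hAdj_symm]
  loopless := by constructor; intro u h; rw [hAdj_irrefl] at h; exact absurd h (by simp)

lemma bup_adj {N : ℕ} (u v : Fin N) : (bup N).Adj u v ↔ hAdj (res u) (res v) = true :=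
  Iff.rfl

lemma avoid_red {N k : ℕ} (hk : 1 ≤ k) (hdeg : 10 * (N / 21 + 1) ≤ 2 * k - 1) :
    ¬ HasDoubleStar (bup N) (2 * k - 1) (k - 1) := by
  classical
  rintro ⟨u, v, A, B, hadj, hA, hB, hvA, _, _, hcA, _⟩
  have hsub : insert v A ⊆
      Finset.univ.filter (fun x : Fin N => hAdj (res u) (res x) = true) := by
    intro x hx
    rw [Finset.mem_insert] at hx
    rw [Finset.mem_filter]
    refine ⟨Finset.mem_univ _, ?_⟩
    rcases hx with rfl | hx
    · exact (bup_adj u x).1 hadj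
    · exact (bup_adj u x).1 (hA (Finset.mem_coe.2 hx))
  have h1 : (insert v A).card = 2 * k := by
    rw [Finset.card_insert_of_notMem hvA, hcA]; omega
  have h2 := Finset.card_le_card hsub
  have h3 := count_upper (N := N) (fun t => hAdj (res u) t = true)
  rw [hAdj_deg] at h3
  omega

lemma avoid_blue {N k : ℕ} (hk : 1 ≤ k) (hco : N < 3 * k + 6 * (N / 21)) :
    ¬ HasDoubleStar (bup N)ᶜ (2 * k - 1) (k - 1) := by
  classical
  rintro ⟨u, v, A, B, hadj, hA, hB, hvA, huB, hdisj, hcA, hcB⟩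
  rw [SimpleGraph.compl_adj] at hadj
  obtain ⟨hne, hnadj⟩ := hadj
  have hfalse : hAdj (res u) (res v) = false := by
    rw [bup_adj] at hnadj
    exact Bool.not_eq_true _ ▸ (eq_false_of_ne_true hnadj)
  have huA : u ∉ A := by
    intro h
    have := hA (Finset.mem_coe.2 h)
    rw [SimpleGraph.mem_neighborSet] at this
    exact (bup N)ᶜ.irrefl this
  have hvB : v ∉ B := by
    intro h
    have := hB (Finset.mem_coe.2 h)
    rw [SimpleGraph.mem_neighborSet] at this
    exact (bup N)ᶜ.irrefl this
  set I := Finset.univ.filter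
    (fun x : Fin N => hAdj (res u) (res x) = true ∧ hAdj (res v) (res x) = true) with hI
  have hIcard : 6 * (N / 21) ≤ I.card := by
    have hcl := count_lower (N := N)
      (fun t => hAdj (res u) t = true ∧ hAdj (res v) t = true)
    have h6 := hAdj_codeg (res u) (res v) hfalse
    calc 6 * (N / 21)
        ≤ (Finset.univ.filter
            (fun t => hAdj (res u) t = true ∧ hAdj (res v) t = true)).card * (N / 21) :=
          Nat.mul_le_mul_right _ h6
      _ ≤ I.card := hcl
  set W := insert u (insert v (A ∪ B)) with hW
  have hWcard : W.card = 3 * k := by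
    rw [hW, Finset.card_insert_of_notMem (by simp [hne, huA, huB]),
      Finset.card_insert_of_notMem (by simp [hvA, hvB]),
      Finset.card_union_of_disjoint hdisj, hcA, hcB]
    omega
  have hWI : Disjoint W I := by
    rw [Finset.disjoint_left]
    intro x hxW hxI
    rw [hI, Finset.mem_filter] at hxI
    obtain ⟨-, hx1, hx2⟩ := hxI
    rw [hW] at hxW
    simp only [Finset.mem_insert, Finset.mem_union] at hxW
    rcases hxW with rfl | rfl | hx | hx
    · rw [hAdj_irrefl] at hx1; exact absurd hx1 (by simp)
    · rw [hAdj_irrefl] at hx2; exact absurd hx2 (by simp)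
    · have := hA (Finset.mem_coe.2 hx)
      rw [SimpleGraph.mem_neighborSet, SimpleGraph.compl_adj, bup_adj] at this
      exact this.2 hx1
    · have := hB (Finset.mem_coe.2 hx)
      rw [SimpleGraph.mem_neighborSet, SimpleGraph.compl_adj, bup_adj] at this
      exact this.2 hx2
  have hcard := Finset.card_le_univ (W ∪ I)
  rw [Finset.card_union_of_disjoint hWI, Fintype.card_fin] at hcard
  omega

/-! ### Upper bound: the Ramsey set is nonempty -/

lemma hasDS_of_edge {V : Type*} [Fintype V] [DecidableEq V] (G : SimpleGraph V)
    [DecidableRel G.Adj] {u v : V} (h : G.Adj u v) {n m : ℕ}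
    (hu : n + m + 1 ≤ (G.neighborFinset u).card)
    (hv : n + m + 1 ≤ (G.neighborFinset v).card) :
    HasDoubleStar G n m := by
  have hv' : v ∈ G.neighborFinset u := (G.mem_neighborFinset u v).2 h
  have hu' : u ∈ G.neighborFinset v := (G.mem_neighborFinset v u).2 h.symm
  obtain ⟨A, hA, hAcard⟩ := Finset.exists_subset_card_eq
    (s := (G.neighborFinset u).erase v) (n := n)
    (by rw [Finset.card_erase_of_mem hv']; omega)
  obtain ⟨B, hB, hBcard⟩ := Finset.exists_subset_card_eq
    (s := ((G.neighborFinset v).erase u) \ A) (n := m)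
    (by
      have h1 := Finset.le_card_sdiff A ((G.neighborFinset v).erase u)
      rw [Finset.card_erase_of_mem hu'] at h1
      omega)
  refine ⟨u, v, A, B, h, ?_, ?_, ?_, ?_, ?_, hAcard, hBcard⟩
  · intro x hx
    exact (G.mem_neighborFinset u x).1 (Finset.mem_of_mem_erase (hA (Finset.mem_coe.1 hx)))
  · intro x hx
    exact (G.mem_neighborFinset v x).1
      (Finset.mem_of_mem_erase (Finset.mem_sdiff.1 (hB (Finset.mem_coe.1 hx))).1)
  · intro hvA
    exact Finset.notMem_erase v _ (hA hvA)
  · intro huB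
    exact Finset.notMem_erase u _ (Finset.mem_sdiff.1 (hB huB)).1
  · exact (Finset.sdiff_disjoint.mono_left hB).symm

lemma ramsey_mem (n m : ℕ) :
    ∀ G : SimpleGraph (Fin (2 * n + 2 * m + 4)),
      HasDoubleStar G n m ∨ HasDoubleStar Gᶜ n m := by
  intro G
  classical
  set s := n + m + 1 with hs
  set X : Finset (Fin (2 * n + 2 * m + 4)) :=
    Finset.univ.filter (fun v => s ≤ (G.neighborFinset v).card) with hX
  by_cases h1 : ∃ x ∈ X, ∃ y ∈ X, G.Adj x y
  · obtain ⟨x, hx, y, hy, hxy⟩ := h1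
    rw [hX, Finset.mem_filter] at hx hy
    exact Or.inl (hasDS_of_edge G hxy hx.2 hy.2)
  by_cases h2 : ∃ x, x ∉ X ∧ ∃ y, y ∉ X ∧ Gᶜ.Adj x y
  · obtain ⟨x, hx, y, hy, hxy⟩ := h2
    have key : ∀ w : Fin (2 * n + 2 * m + 4), w ∉ X → s ≤ (Gᶜ.neighborFinset w).card := by
      intro w hw
      have hdeg : (G.neighborFinset w).card < s := by
        by_contra hcon
        exact hw (by rw [hX, Finset.mem_filter]; exact ⟨Finset.mem_univ _, by omega⟩)
      have hsub : Finset.univ \ insert w (G.neighborFinset w) ⊆ Gᶜ.neighborFinset w := by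
        intro z hz
        rw [Finset.mem_sdiff, Finset.mem_insert] at hz
        push_neg at hz
        rw [G.mem_neighborFinset] at hz
        rw [Gᶜ.mem_neighborFinset, SimpleGraph.compl_adj]
        exact ⟨fun hzw => hz.2.1 hzw.symm, hz.2.2⟩
      have hcard := Finset.card_le_card hsub
      have hins : (insert w (G.neighborFinset w)).card = (G.neighborFinset w).card + 1 := by
        rw [Finset.card_insert_of_notMem]
        intro hmem
        exact G.irrefl ((G.mem_neighborFinset w w).1 hmem)
      rw [Finset.card_sdiff_of_subset (Finset.subset_univ _), Finset.card_univ, Fintype.card_fin,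
        hins] at hcard
      omega
    exact Or.inr (hasDS_of_edge Gᶜ hxy (key x hx) (key y hy))
  · push_neg at h1 h2
    rcases le_or_gt (s + 1) X.card with hc | hc
    · -- X is a clique in Gᶜ
      obtain ⟨x, hx, y, hy, hxy⟩ := Finset.one_lt_card.1 (by omega : 1 < X.card)
      have hadj : ∀ a ∈ X, ∀ b ∈ X, a ≠ b → Gᶜ.Adj a b := by
        intro a ha b hb hab
        rw [SimpleGraph.compl_adj]
        exact ⟨hab, h1 a ha b hb⟩
      have key : ∀ w ∈ X, s ≤ (Gᶜ.neighborFinset w).card := by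
        intro w hw
        have hsub : X.erase w ⊆ Gᶜ.neighborFinset w := by
          intro z hz
          rw [Finset.mem_erase] at hz
          rw [Gᶜ.mem_neighborFinset]
          exact hadj w hw z hz.2 (fun h => hz.1 h.symm)
        have := Finset.card_le_card hsub
        rw [Finset.card_erase_of_mem hw] at this
        omega
      exact Or.inr (hasDS_of_edge Gᶜ (hadj x hx y hy hxy) (key x hx) (key y hy))
    · -- the complement of X is a clique in G
      set Y := Finset.univ \ X with hY
      have hYcard : s + 1 ≤ Y.card := by
        rw [hY, Finset.card_sdiff_of_subset (Finset.subset_univ _), Finset.card_univ, Fintype.card_fin]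
        omega
      obtain ⟨x, hx, y, hy, hxy⟩ := Finset.one_lt_card.1 (by omega : 1 < Y.card)
      have hnot : ∀ a ∈ Y, a ∉ X := by
        intro a ha
        rw [hY, Finset.mem_sdiff] at ha
        exact ha.2
      have hadj : ∀ a ∈ Y, ∀ b ∈ Y, a ≠ b → G.Adj a b := by
        intro a ha b hb hab
        by_contra hcon
        exact h2 a (hnot a ha) b (hnot b hb) ((SimpleGraph.compl_adj G a b).2 ⟨hab, hcon⟩)
      have key : ∀ w ∈ Y, s ≤ (G.neighborFinset w).card := by
        intro w hw
        have hsub : Y.erase w ⊆ G.neighborFinset w := by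
          intro z hz
          rw [Finset.mem_erase] at hz
          rw [G.mem_neighborFinset]
          exact hadj w hw z hz.2 (fun h => hz.1 h.symm)
        have := Finset.card_le_card hsub
        rw [Finset.card_erase_of_mem hw] at this
        omega
      exact Or.inl (hasDS_of_edge G (hadj x hx y hy hxy) (key x hx) (key y hy))

/-! ### Lower bound -/

lemma lower_aux {ε : ℝ} (hε : 0 < ε) :
    ∃ K : ℕ, ∀ k : ℕ, K ≤ k → ∀ N : ℕ,
      (∀ G : SimpleGraph (Fin N),
        HasDoubleStar G (2 * k - 1) (k - 1) ∨ HasDoubleStar Gᶜ (2 * k - 1) (k - 1)) →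
      ((21 / 5 : ℝ) - ε) * k ≤ N := by
  refine ⟨⌈(240 : ℝ) / ε⌉₊ + 1, fun k hk N hN => ?_⟩
  by_contra hcon
  push_neg at hcon
  have hk1 : 1 ≤ k := le_trans (Nat.le_add_left 1 _) hk
  have hεk : (240 : ℝ) ≤ ε * k := by
    have h1 : (240 : ℝ) / ε ≤ (⌈(240 : ℝ) / ε⌉₊ : ℝ) := Nat.le_ceil _
    have h2 : ((⌈(240 : ℝ) / ε⌉₊ : ℕ) : ℝ) ≤ (k : ℝ) := by
      exact_mod_cast le_trans (Nat.le_succ _) hk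
    have h3 : (240 : ℝ) / ε ≤ (k : ℝ) := le_trans h1 h2
    rw [div_le_iff₀ hε] at h3
    linarith
  have hq : ((N / 21 : ℕ) : ℝ) ≤ (N : ℝ) / 21 := Nat.cast_div_le
  have hq2 : (N : ℝ) ≤ 21 * ((N / 21 : ℕ) : ℝ) + 20 := by
    have h1 : N % 21 < 21 := Nat.mod_lt _ (by norm_num)
    have h2 : 21 * (N / 21) + N % 21 = N := Nat.div_add_mod N 21
    have h3 : N ≤ 21 * (N / 21) + 20 := by omega
    exact_mod_cast h3
  -- degree condition
  have hdegR : ((10 * (N / 21 + 1) : ℕ) : ℝ) < ((2 * k - 1 : ℕ) : ℝ) := by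
    have hc : ((2 * k - 1 : ℕ) : ℝ) = 2 * (k : ℝ) - 1 := by
      have h1 : (1 : ℕ) ≤ 2 * k := by omega
      push_cast [Nat.cast_sub h1]
      ring
    rw [hc]
    push_cast
    linarith
  have hdeg : 10 * (N / 21 + 1) ≤ 2 * k - 1 := by
    have := Nat.cast_lt (α := ℝ) |>.1 hdegR
    omega
  -- codegree condition
  have hcoR : ((N : ℕ) : ℝ) < ((3 * k + 6 * (N / 21) : ℕ) : ℝ) := by
    push_cast
    linarith
  have hco : N < 3 * k + 6 * (N / 21) := by exact_mod_cast hcoR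
  rcases hN (bup N) with h | h
  · exact avoid_red hk1 hdeg h
  · exact avoid_blue hk1 hco h

lemma main_lower : ∀ ε : ℝ, 0 < ε → ∃ K : ℕ, ∀ k : ℕ, K ≤ k →
    ((21 / 5 : ℝ) - ε) * k ≤ (doubleStarRamsey (2 * k - 1) (k - 1) : ℝ) := by
  intro ε hε
  obtain ⟨K, hK⟩ := lower_aux hε
  refine ⟨K, fun k hk => ?_⟩
  have hne : Set.Nonempty {N : ℕ | ∀ G : SimpleGraph (Fin N),
      HasDoubleStar G (2 * k - 1) (k - 1) ∨ HasDoubleStar Gᶜ (2 * k - 1) (k - 1)} :=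
    ⟨2 * (2 * k - 1) + 2 * (k - 1) + 4, ramsey_mem (2 * k - 1) (k - 1)⟩
  have hmem := Nat.sInf_mem hne
  rw [doubleStarRamsey]
  exact hK k hk _ hmem

end DSProof

theorem ramsey_beats_burr :
    (∀ ε : ℝ, 0 < ε → ∃ K : ℕ, ∀ k : ℕ, K ≤ k →
      ((21/5 : ℝ) - ε) * k ≤ (doubleStarRamsey (2*k - 1) (k - 1) : ℝ)) ∧
    (∃ K : ℕ, ∀ k : ℕ, K ≤ k →
      4*k - 1 < doubleStarRamsey (2*k - 1) (k - 1)) := by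
  constructor
  · exact DSProof.main_lower
  · obtain ⟨K, hK⟩ := DSProof.main_lower (1/10) (by norm_num)
    refine ⟨max K 20, fun k hk => ?_⟩
    have h1 := hK k (le_trans (le_max_left _ _) hk)
    have h2 : (20 : ℕ) ≤ k := le_trans (le_max_right _ _) hk
    have h3 : ((4 * k + 2 : ℕ) : ℝ) ≤ (doubleStarRamsey (2 * k - 1) (k - 1) : ℝ) := by
      refine le_trans ?_ h1
      have h20 : (20 : ℝ) ≤ (k : ℝ) := by exact_mod_cast h2
      push_cast
      linarith
    have h4 : 4 * k + 2 ≤ doubleStarRamsey (2 * k - 1) (k - 1) := by exact_mod_cast h3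
    omega
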